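/- Let K be a field of characteristic different from 2, let d ∈ K^× be a non-square, and set L = K(√d). Let φ = ⟨a₁, a₂, a₃, a₄, a₅, a₆⟩ be an anisotropic diagonal quadratic form in six variables over K whose determinant a₁a₂a₃a₄a₅a₆ lies in −(K^×)² (i.e., equals −u² for some u ∈ K^×). If φ becomes isotropic after extension of scalars to L, then there exist λ, p, q, r ∈ K^× such that φ is equivalent (isometric) to λ·⟨1, −d, −p, q, r, −dpqr⟩. -/

import Mathlib

open QuadraticMap

variable {K : Type} [Field K] [Invertible (2 : K)] {n : Type*} [Fintype n] [DecidableEq n]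

lemma assoc_wss (w : n → K) (x y : n → K) :
    QuadraticMap.associated (R := K) (weightedSumSquares K w) x y
      = ∑ i, w i * (x i * y i) := by
  have h := congrFun (congrArg DFunLike.coe (congrFun (congrArg DFunLike.coe
    (two_nsmul_associated K (weightedSumSquares K w))) x)) y
  simp only [LinearMap.smul_apply, polarBilin_apply_apply] at h
  have h2 : (2:K) * QuadraticMap.associated (R := K) (weightedSumSquares K w) x y
      = polar (weightedSumSquares K w) x y := by
    rw [← h]; push_cast [nsmul_eq_mul]; ring
  have hp : polar (weightedSumSquares K w) x y = 2 * ∑ i, w i * (x i * y i) := by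
    simp only [polar, weightedSumSquares_apply, smul_eq_mul, Pi.add_apply, Finset.mul_sum,
      ← Finset.sum_sub_distrib]
    exact Finset.sum_congr rfl fun i _ => by ring
  rw [hp] at h2
  exact mul_left_cancel₀ (Invertible.ne_zero (2:K)) h2

lemma toMatrix'_wss (w : n → K) :
    QuadraticForm.toMatrix' (weightedSumSquares K w) = Matrix.diagonal w := by
  ext i j
  rw [QuadraticForm.toMatrix', LinearMap.toMatrix₂'_apply, assoc_wss]
  rcases eq_or_ne i j with rfl | hij
  · simp [Pi.single_apply, Finset.sum_ite_eq', Matrix.diagonal]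
  · simp only [Matrix.diagonal_apply_ne _ hij, Pi.single_apply]
    rw [Finset.sum_eq_zero]
    intro k _
    rcases eq_or_ne k i with rfl | hki
    · simp [hij, if_neg (Ne.symm hij)]
    · simp [if_neg hki]

lemma discr_wss (w : n → K) : QuadraticForm.discr' (weightedSumSquares K w) = ∏ i, w i := by
  rw [QuadraticForm.discr', toMatrix'_wss, Matrix.det_diagonal]

lemma equiv_of_discr {w w' : n → K} (h : (weightedSumSquares K w).Equivalent
    (weightedSumSquares K w')) : ∃ e : K, e ≠ 0 ∧ ∏ i, w i = e ^ 2 * ∏ i, w' i := by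
  obtain ⟨f⟩ := h
  have hcomp : weightedSumSquares K w
      = (weightedSumSquares K w').comp (f.toLinearEquiv : (n → K) →ₗ[K] (n → K)) := by
    ext m
    exact (f.map_app m).symm
  have hdet : (LinearMap.toMatrix' (f.toLinearEquiv : (n → K) →ₗ[K] (n → K))).det ≠ 0 := by
    rw [LinearMap.det_toMatrix']
    exact f.toLinearEquiv.isUnit_det'.ne_zero
  refine ⟨_, hdet, ?_⟩
  have := QuadraticForm.discr'_comp (Q := weightedSumSquares K w')
    (f.toLinearEquiv : (n → K) →ₗ[K] (n → K))
  rw [← hcomp, discr_wss, discr_wss] at this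
  rw [this]; ring

lemma smul_wss (lam : K) (w : n → K) :
    lam • weightedSumSquares K w = weightedSumSquares K (fun i => lam * w i) := by
  ext v
  simp only [QuadraticMap.smul_apply, weightedSumSquares_apply, smul_eq_mul, Finset.mul_sum]
  exact Finset.sum_congr rfl fun i _ => by ring

lemma equiv_scale (w s : n → K) (hs : ∀ i, s i ≠ 0) :
    (weightedSumSquares K (fun i => w i * s i ^ 2)).Equivalent (weightedSumSquares K w) := by
  set e := LinearEquiv.piCongrRight fun i => LinearEquiv.smulOfNeZero K K (s i) (hs i) with he
  refine ⟨⟨e, fun m => ?_⟩⟩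
  have happ : ∀ i, e m i = s i * m i := fun i => rfl
  show (weightedSumSquares K w) (e m) = _
  simp only [weightedSumSquares_apply, smul_eq_mul, happ]
  exact Finset.sum_congr rfl fun i _ => by ring

lemma step1 (K L : Type) [Field K] [Field L] [Algebra K L]
    (hchar : ringChar K ≠ 2)
    (d : K) (hnonsq : ¬∃ x : K, x ^ 2 = d)
    (hquad : Module.finrank K L = 2)
    (hsqrt : ∃ δ : L, δ ^ 2 = algebraMap K L d)
    (a : Fin 6 → K)
    (haniso : (weightedSumSquares K a).Anisotropic)
    (hiso : ¬(weightedSumSquares L fun i => algebraMap K L (a i)).Anisotropic) :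
    ∃ x y : Fin 6 → K,
      weightedSumSquares K a y ≠ 0 ∧
      weightedSumSquares K a x = -(d * weightedSumSquares K a y) ∧
      ∑ i, a i * (x i * y i) = 0 := by
  obtain ⟨δ, hδ⟩ := hsqrt
  have halg : Function.Injective (algebraMap K L) := (algebraMap K L).injective
  -- key independence of 1, δ
  have hkey : ∀ s t : K, algebraMap K L s + algebraMap K L t * δ = 0 → s = 0 ∧ t = 0 := by
    intro s t hst
    rcases eq_or_ne t 0 with rfl | ht
    · simp only [map_zero, zero_mul, add_zero] at hst
      exact ⟨halg (by simpa using hst), rfl⟩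
    · exfalso
      apply hnonsq
      refine ⟨-s / t, ?_⟩
      apply halg
      have ht' : algebraMap K L t ≠ 0 := fun h => ht (halg (by simpa using h))
      have hs : algebraMap K L s = -(algebraMap K L t * δ) := by linear_combination hst
      rw [map_pow, map_div₀, _root_.map_neg, ← hδ, hs, neg_neg, mul_comm, mul_div_assoc,
        div_self ht', mul_one]
  have hli : LinearIndependent K ![(1 : L), δ] := by
    rw [LinearIndependent.pair_iff]
    intro s t hst
    apply hkey
    rw [Algebra.smul_def, Algebra.smul_def] at hst
    simpa using hst
  have hcard : Fintype.card (Fin 2) = Module.finrank K L := by simp [hquad]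
  let bL := basisOfLinearIndependentOfCardEqFinrank hli hcard
  have hbL : ⇑bL = ![(1 : L), δ] := coe_basisOfLinearIndependentOfCardEqFinrank hli hcard
  -- get isotropic vector
  rw [QuadraticMap.Anisotropic] at hiso
  push_neg at hiso
  obtain ⟨v, hv0, hvne⟩ := hiso
  set x : Fin 6 → K := fun i => bL.repr (v i) 0 with hx
  set y : Fin 6 → K := fun i => bL.repr (v i) 1 with hy
  have hvi : ∀ i, v i = algebraMap K L (x i) + algebraMap K L (y i) * δ := by
    intro i
    have := bL.sum_repr (v i)
    rw [Fin.sum_univ_two] at this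
    rw [← this, hbL]
    simp [Algebra.smul_def]; rfl
  -- expand the quadratic form
  have hexp : algebraMap K L (∑ i, (a i * (x i * x i) + d * (a i * (y i * y i))))
      + algebraMap K L (∑ i, 2 * (a i * (x i * y i))) * δ = 0 := by
    rw [map_sum, map_sum, Finset.sum_mul, ← Finset.sum_add_distrib, ← hv0]
    rw [weightedSumSquares_apply]
    refine Finset.sum_congr rfl fun i _ => ?_
    rw [hvi i, smul_eq_mul]
    push_cast [map_add, map_mul, map_ofNat]
    linear_combination (-(algebraMap K L (a i) * algebraMap K L (y i) * algebraMap K L (y i))) * hδ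
  obtain ⟨hE1, hE2⟩ := hkey _ _ hexp
  have h2ne : (2 : K) ≠ 0 := Ring.two_ne_zero hchar
  have hE2' : ∑ i, a i * (x i * y i) = 0 := by
    rw [← Finset.mul_sum] at hE2
    exact (mul_eq_zero.1 hE2).resolve_left h2ne
  have hE1' : weightedSumSquares K a x + d * weightedSumSquares K a y = 0 := by
    rw [weightedSumSquares_apply, weightedSumSquares_apply]
    simp only [smul_eq_mul]
    rw [Finset.mul_sum, ← Finset.sum_add_distrib, ← hE1]
  -- y ≠ 0
  have hyne : y ≠ 0 := by
    intro hy0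
    apply hvne
    have hx0 : weightedSumSquares K a x = 0 := by
      have : weightedSumSquares K a y = 0 := by
        rw [weightedSumSquares_apply]
        simp [hy0]
      rw [this, mul_zero, add_zero] at hE1'
      exact hE1'
    have := haniso x hx0
    funext i
    rw [hvi i, this]
    simp [hy0]
  have hQy : weightedSumSquares K a y ≠ 0 := fun h => hyne (haniso y h)
  exact ⟨x, y, hQy, by linear_combination hE1', hE2'⟩

lemma step2 (K : Type) [Field K] [Invertible (2 : K)] (a : Fin 6 → K)
    (haniso : (weightedSumSquares K a).Anisotropic)
    (x y : Fin 6 → K)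
    (hQy : weightedSumSquares K a y ≠ 0) (hQx : weightedSumSquares K a x ≠ 0)
    (hortho : ∑ i, a i * (x i * y i) = 0) :
    ∃ c : Fin 6 → K, (∀ i, c i ≠ 0) ∧ c 0 = weightedSumSquares K a y ∧
      c 1 = weightedSumSquares K a x ∧
      (weightedSumSquares K a).Equivalent (weightedSumSquares K c) := by
  classical
  set Q := weightedSumSquares K a with hQ
  set B := QuadraticMap.associated (R := K) Q with hB
  have hBapp : ∀ u v : Fin 6 → K, B u v = ∑ i, a i * (u i * v i) := fun u v => assoc_wss a u v
  have hBsymm : B.IsSymm := ⟨QuadraticMap.associated_isSymm K Q⟩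
  have hQself : ∀ u, B u u = Q u := fun u => QuadraticMap.associated_eq_self_apply K Q u
  have hBxy : B x y = 0 := by rw [hBapp, ← hortho]
  have hByx : B y x = 0 := by
    rw [hBapp, ← hortho]; exact Finset.sum_congr rfl fun i _ => by ring
  have hyne : y ≠ 0 := fun h => hQy (by rw [h]; exact map_zero _)
  have hxne : x ≠ 0 := fun h => hQx (by rw [h]; exact map_zero _)
  -- linear independence of y, x
  have hli : LinearIndependent K ![y, x] := by
    rw [LinearIndependent.pair_iff]
    intro s t hst
    have h1 : s * Q y = 0 := by
      have := congrArg (fun z => B z y) hst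
      simpa [_root_.map_smul, hBxy, hQself, smul_eq_mul] using this
    have hs : s = 0 := by
      rcases mul_eq_zero.1 h1 with h | h
      · exact h
      · exact absurd h hQy
    have h2 : t * Q x = 0 := by
      have := congrArg (fun z => B z x) hst
      rw [hs] at this
      simpa [_root_.map_smul, hByx, hQself, smul_eq_mul] using this
    have ht : t = 0 := by
      rcases mul_eq_zero.1 h2 with h | h
      · exact h
      · exact absurd h hQx
    exact ⟨hs, ht⟩
  -- the plane W spanned by y, x
  set W : Submodule K (Fin 6 → K) := Submodule.span K (Set.range ![y, x]) with hW
  let bW : Module.Basis (Fin 2) K W := Module.Basis.span hli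
  have hbW0 : (bW 0 : Fin 6 → K) = y := congrArg Subtype.val (Module.Basis.span_apply hli 0)
  have hbW1 : (bW 1 : Fin 6 → K) = x := congrArg Subtype.val (Module.Basis.span_apply hli 1)
  have hrestr : (LinearMap.BilinForm.restrict B W).Nondegenerate := by
    refine ⟨?_, ?_⟩
    all_goals
      rintro ⟨w, hw⟩ h
      have hQw : Q w = 0 := by
        have := h ⟨w, hw⟩
        rw [LinearMap.BilinForm.restrict_apply] at this
        rw [← hQself]
        exact this
      exact Subtype.ext (haniso w hQw)
  have hcompl : IsCompl W (LinearMap.BilinForm.orthogonal B W) :=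
    LinearMap.BilinForm.isCompl_orthogonal_of_restrict_nondegenerate hBsymm.isRefl hrestr
  set W' := LinearMap.BilinForm.orthogonal B W with hW'
  have hrankW : Module.finrank K W = 2 := by
    rw [hW, finrank_span_eq_card hli]
    simp
  have hrankW' : Module.finrank K W' = 4 := by
    have h1 := Submodule.finrank_add_eq_of_isCompl hcompl
    rw [hrankW, Module.finrank_fin_fun] at h1
    omega
  have hsymm' : (LinearMap.BilinForm.restrict B W').IsSymm := by
    refine ⟨fun u v => ?_⟩
    rw [LinearMap.BilinForm.restrict_apply, LinearMap.BilinForm.restrict_apply]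
    exact hBsymm.eq _ _
  obtain ⟨v', hv'⟩ := LinearMap.BilinForm.exists_orthogonal_basis (LinearMap.BilinForm.isSymm_iff.mp hsymm')
  let bW' : Module.Basis (Fin 4) K W' := v'.reindex (finCongr hrankW')
  let e : (Fin 2 ⊕ Fin 4) ≃ Fin 6 := finSumFinEquiv.trans (finCongr (by norm_num))
  let bV : Module.Basis (Fin 2 ⊕ Fin 4) K (Fin 6 → K) :=
    (bW.prod bW').map (Submodule.prodEquivOfIsCompl W W' hcompl)
  let b6 : Module.Basis (Fin 6) K (Fin 6 → K) := bV.reindex e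
  -- values of bV
  have hbVl : ∀ i : Fin 2, bV (Sum.inl i) = (bW i : Fin 6 → K) := by
    intro i
    rw [Module.Basis.map_apply, Submodule.coe_prodEquivOfIsCompl']
    rw [Module.Basis.prod_apply_inl_fst, Module.Basis.prod_apply_inl_snd]
    simp
  have hbVr : ∀ j : Fin 4, bV (Sum.inr j) = (bW' j : Fin 6 → K) := by
    intro j
    rw [Module.Basis.map_apply, Submodule.coe_prodEquivOfIsCompl']
    rw [Module.Basis.prod_apply_inr_fst, Module.Basis.prod_apply_inr_snd]
    simp
  -- membership facts
  have hmemW : ∀ i : Fin 2, (bW i : Fin 6 → K) ∈ W := fun i => (bW i).2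
  have hmemW' : ∀ j : Fin 4, (bW' j : Fin 6 → K) ∈ W' := fun j => (bW' j).2
  -- orthogonality
  have horthV : B.IsOrthoᵢ ⇑bV := by
    intro i j hij
    rcases i with i | i <;> rcases j with j | j
    · show B (bV (Sum.inl i)) (bV (Sum.inl j)) = 0
      rw [hbVl, hbVl]
      have hij' : i ≠ j := fun h => hij (by rw [h])
      match i, j with
      | 0, 0 => exact absurd rfl hij'
      | 0, 1 => rw [hbW0, hbW1]; exact hByx
      | 1, 0 => rw [hbW1, hbW0]; exact hBxy
      | 1, 1 => exact absurd rfl hij'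
    · show B (bV (Sum.inl i)) (bV (Sum.inr j)) = 0
      rw [hbVl, hbVr]
      exact LinearMap.BilinForm.mem_orthogonal_iff.mp (hmemW' j) _ (hmemW i)
    · show B (bV (Sum.inr i)) (bV (Sum.inl j)) = 0
      rw [hbVr, hbVl]
      have h0 : B (bW j : Fin 6 → K) (bW' i : Fin 6 → K) = 0 :=
        LinearMap.BilinForm.mem_orthogonal_iff.mp (hmemW' i) _ (hmemW j)
      have := hBsymm.eq ((bW j : Fin 6 → K)) ((bW' i : Fin 6 → K))
      rw [RingHom.id_apply] at this
      rw [← this, h0]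
    · show B (bV (Sum.inr i)) (bV (Sum.inr j)) = 0
      rw [hbVr, hbVr]
      have hij' : (finCongr hrankW').symm i ≠ (finCongr hrankW').symm j :=
        fun h => hij (by rw [show i = j from (Equiv.injective _) h])
      have h0 : (LinearMap.BilinForm.restrict B W') (v' ((finCongr hrankW').symm i))
          (v' ((finCongr hrankW').symm j)) = 0 := hv' hij'
      rw [LinearMap.BilinForm.restrict_apply] at h0
      have hcoer : ∀ k : Fin 4, (bW' k : Fin 6 → K)
          = ((v' ((finCongr hrankW').symm k) : W') : Fin 6 → K) := by
        intro k
        rw [show bW' k = v' ((finCongr hrankW').symm k) from Module.Basis.reindex_apply _ _ _]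
      rw [hcoer i, hcoer j]
      exact h0
  have horth6 : B.IsOrthoᵢ ⇑b6 := by
    intro i j hij
    show B (b6 i) (b6 j) = 0
    rw [Module.Basis.reindex_apply, Module.Basis.reindex_apply]
    exact horthV (fun h => hij (by rw [show i = j from (Equiv.injective _) h]))
  -- the equivalence
  have heq : Q.Equivalent (weightedSumSquares K fun k => Q (b6 k)) := by
    have h1 : Q.basisRepr b6 = weightedSumSquares K fun k => Q (b6 k) :=
      QuadraticMap.basisRepr_eq_of_iIsOrtho Q b6 horth6
    exact h1 ▸ ⟨Q.isometryEquivBasisRepr b6⟩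
  refine ⟨fun k => Q (b6 k), ?_, ?_, ?_, heq⟩
  · intro k
    exact fun h => b6.ne_zero k (haniso _ h)
  · show Q (b6 0) = Q y
    have : b6 0 = bV (Sum.inl 0) := by
      rw [Module.Basis.reindex_apply]
      congr 1
    rw [this, hbVl, hbW0]
  · show Q (b6 1) = Q x
    have : b6 1 = bV (Sum.inl 1) := by
      rw [Module.Basis.reindex_apply]
      congr 1
    rw [this, hbVl, hbW1]

/-- Let `K` be a field of characteristic `≠ 2`, `d ∈ K^×` a non-square and
`L = K(√d)`.  Let `φ = ⟨a₁, …, a₆⟩` be an anisotropic diagonal quadratic form in six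
variables over `K` whose determinant `a₁⋯a₆` lies in `−(K^×)²`.  If `φ` becomes isotropic
over `L`, then `φ` is equivalent to `λ • ⟨1, −d, −p, q, r, −dpqr⟩` for some
`λ, p, q, r ∈ K^×`. -/
theorem anisotropic_sixdim_normal_form
    (K L : Type) [Field K] [Field L] [Algebra K L]
    (hchar : ringChar K ≠ 2)
    (d : K) (hd : d ≠ 0) (hnonsq : ¬∃ x : K, x ^ 2 = d)
    (hquad : Module.finrank K L = 2)
    (hsqrt : ∃ δ : L, δ ^ 2 = algebraMap K L d)
    (a : Fin 6 → K)
    (hdet : ∃ u : K, u ≠ 0 ∧ a 0 * a 1 * a 2 * a 3 * a 4 * a 5 = -(u ^ 2))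
    (haniso : (weightedSumSquares K a).Anisotropic)
    (hiso : ¬(weightedSumSquares L fun i => algebraMap K L (a i)).Anisotropic) :
    ∃ lam p q r : K, lam ≠ 0 ∧ p ≠ 0 ∧ q ≠ 0 ∧ r ≠ 0 ∧
      (weightedSumSquares K a).Equivalent
        (lam • weightedSumSquares K ![1, -d, -p, q, r, -(d * p * q * r)]) := by
  haveI : Invertible (2 : K) := invertibleOfNonzero (Ring.two_ne_zero hchar)
  obtain ⟨x, y, hQy, hQxval, hortho⟩ := step1 K L hchar d hnonsq hquad hsqrt a haniso hiso
  set l := weightedSumSquares K a y with hl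
  have hlne : l ≠ 0 := hQy
  have hQx : weightedSumSquares K a x ≠ 0 := by
    rw [hQxval]
    exact neg_ne_zero.mpr (mul_ne_zero hd hlne)
  obtain ⟨c, hcne, hc0, hc1, hequiv⟩ := step2 K a haniso x y hQy hQx hortho
  obtain ⟨e, he, hprod⟩ := equiv_of_discr hequiv
  obtain ⟨u, hu, hdeteq⟩ := hdet
  rw [Fin.prod_univ_six, Fin.prod_univ_six] at hprod
  set m := u / (e * l) with hmdef
  have hmne : m ≠ 0 := div_ne_zero hu (mul_ne_zero he hlne)
  have hm2 : d * (c 2 * c 3 * c 4 * c 5) * (e * l) ^ 2 = u ^ 2 := by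
    have hc1' : c 1 = -(d * l) := by rw [hc1, hQxval]
    rw [hc0, hc1'] at hprod
    rw [hdeteq] at hprod
    rw [← hl] at hprod
    linear_combination hprod
  have hm : d * (c 2 * c 3 * c 4 * c 5) = m ^ 2 := by
    rw [hmdef, div_pow, eq_div_iff (pow_ne_zero 2 (mul_ne_zero he hlne))]
    linear_combination hm2
  set p := -(c 2) / l with hp
  set q := c 3 / l with hq
  set r := c 4 / l with hr
  have hpne : p ≠ 0 := div_ne_zero (neg_ne_zero.mpr (hcne 2)) hlne
  have hqne : q ≠ 0 := div_ne_zero (hcne 3) hlne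
  have hrne : r ≠ 0 := div_ne_zero (hcne 4) hlne
  refine ⟨l, p, q, r, hlne, hpne, hqne, hrne, ?_⟩
  rw [smul_wss]
  set c'' : Fin 6 → K := fun i => l * (![1, -d, -p, q, r, -(d * p * q * r)] : Fin 6 → K) i
    with hc''
  set s : Fin 6 → K := ![1, 1, 1, 1, 1, c 5 * l / m] with hs
  have hsne : ∀ i, s i ≠ 0 := by
    intro i
    fin_cases i
    · exact one_ne_zero
    · exact one_ne_zero
    · exact one_ne_zero
    · exact one_ne_zero
    · exact one_ne_zero
    · show c 5 * l / m ≠ 0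
      exact div_ne_zero (mul_ne_zero (hcne 5) hlne) hmne
  have hcc : c = fun i => c'' i * s i ^ 2 := by
    funext i
    fin_cases i
    · show c 0 = l * 1 * 1 ^ 2
      rw [hc0, ← hl]; ring
    · show c 1 = l * -d * 1 ^ 2
      rw [hc1, hQxval]; ring
    · show c 2 = l * -p * 1 ^ 2
      rw [hp]; field_simp
    · show c 3 = l * q * 1 ^ 2
      rw [hq]; field_simp
    · show c 4 = l * r * 1 ^ 2
      rw [hr]; field_simp
    · show c 5 = l * -(d * p * q * r) * (c 5 * l / m) ^ 2
      rw [hp, hq, hr]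
      field_simp
      rw [hmdef] at hm
      linear_combination (-(c 5)) * hm
  refine hequiv.trans ?_
  rw [hcc]
  exact equiv_scale c'' s hsne
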